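/- arXiv:1501.04398 — 2 statements merged into one kernel-verified Lean document; each statement's English description precedes it below -/
import Mathlib

section
/- For vertices u, v of X the following are equivalent: (i) u and v are cospectral and there exists a polynomial p(x) with p(A) e_u = e_v; (ii) u and v are strongly cospectral. Moreover, if u and v are cospectral, then any polynomial p with p(A) e_u = e_v also satisfies p(A) e_v = e_u and p(θ_r) ∈ {+1, −1} for every θ_r ∈ Φ_u. -/
open Matrix Finset Polynomial

variable {V : Type*}

/-- The eccentricity of a vertex: maximum graph distance to any vertex. -/
noncomputable def ecc [Fintype V] (X : SimpleGraph V) (u : V) : ℕ :=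
  Finset.univ.sup fun w => X.dist u w

/-- The standard basis vector of a vertex. -/
def eVec [DecidableEq V] (u : V) : V → ℝ := Pi.single u 1

/-- `SpectralDecomp X d θ E` : `θ 0 > θ 1 > ... > θ d` are the distinct eigenvalues of the
adjacency matrix of `X` and `E r` is the orthogonal projection onto the `θ r`-eigenspace. -/
structure SpectralDecomp [Fintype V] [DecidableEq V] (X : SimpleGraph V) [DecidableRel X.Adj]
    (d : ℕ) (θ : Fin (d + 1) → ℝ) (E : Fin (d + 1) → Matrix V V ℝ) : Prop where
  decomp : X.adjMatrix ℝ = ∑ r, θ r • E r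
  sum_eq_one : ∑ r, E r = 1
  orth : ∀ r s, E r * E s = if r = s then E r else 0
  symm : ∀ r, (E r)ᵀ = E r
  strict_anti : ∀ r s : Fin (d + 1), r < s → θ s < θ r
  proj_ne_zero : ∀ r, E r ≠ 0

open scoped Classical in
/-- The (index set of the) eigenvalue support of a vertex `u`:
those `r` with `E r * e_u ≠ 0`. -/
noncomputable def suppIdx [Fintype V] [DecidableEq V] {d : ℕ}
    (E : Fin (d + 1) → Matrix V V ℝ) (u : V) : Finset (Fin (d + 1)) :=
  Finset.univ.filter fun r => E r *ᵥ eVec u ≠ 0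

/-- The dual degree `d*(u) = |Φ_u| - 1`. -/
noncomputable def dualDeg [Fintype V] [DecidableEq V] {d : ℕ}
    (E : Fin (d + 1) → Matrix V V ℝ) (u : V) : ℕ :=
  (suppIdx E u).card - 1

/-- A vertex is spectrally extremal if its eccentricity equals its dual degree. -/
noncomputable def SpectrallyExtremal [Fintype V] [DecidableEq V] (X : SimpleGraph V) {d : ℕ}
    (E : Fin (d + 1) → Matrix V V ℝ) (u : V) : Prop :=
  ecc X u = dualDeg E u

/-- Vertices are cospectral if the diagonal entries of all spectral projections agree. -/
def Cospectral [Fintype V] [DecidableEq V] {d : ℕ}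
    (E : Fin (d + 1) → Matrix V V ℝ) (u v : V) : Prop :=
  ∀ r, E r u u = E r v v

/-- Vertices are strongly cospectral if `E r e_u = ± E r e_v` for every `r`. -/
def StronglyCospectral [Fintype V] [DecidableEq V] {d : ℕ}
    (E : Fin (d + 1) → Matrix V V ℝ) (u v : V) : Prop :=
  ∀ r, E r *ᵥ eVec v = E r *ᵥ eVec u ∨ E r *ᵥ eVec v = -(E r *ᵥ eVec u)

/-- `u` and `v` are antipodal vertices: they are cospectral, the distance partition of `u`
coincides with that of `v`, it is pseudo equitable (with respect to a positive Perron
eigenvector), and `{u}`, `{v}` are singleton classes at maximum distance from each other. -/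
noncomputable def Antipodal [Fintype V] [DecidableEq V] (X : SimpleGraph V) [DecidableRel X.Adj]
    {d : ℕ} (θ : Fin (d + 1) → ℝ) (E : Fin (d + 1) → Matrix V V ℝ) (u v : V) : Prop :=
  Cospectral E u v ∧
  -- the two distance partitions have the same classes
  (∀ i : ℕ, i ≤ ecc X u → ∃ j : ℕ, ∀ w, X.dist u w = i ↔ X.dist v w = j) ∧
  (∀ j : ℕ, j ≤ ecc X v → ∃ i : ℕ, ∀ w, X.dist u w = i ↔ X.dist v w = j) ∧
  -- `{u}` and `{v}` are singletons at maximum distance from each other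
  X.dist u v = ecc X u ∧ X.dist u v = ecc X v ∧
  (∀ w, X.dist u w = X.dist u v → w = v) ∧
  (∀ w, X.dist v w = X.dist u v → w = u) ∧
  -- the partition is pseudo equitable with respect to a positive eigenvector
  -- for the largest eigenvalue `θ 0`
  ∃ x : V → ℝ, (∀ w, 0 < x w) ∧ X.adjMatrix ℝ *ᵥ x = θ 0 • x ∧
    ∀ i : ℕ, ∀ w₁ w₂ : V, X.dist u w₁ = X.dist u w₂ →
      ∑ c ∈ Finset.univ.filter (fun c => X.dist u c = i),
          (X.adjMatrix ℝ) w₁ c * x c / x w₁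
        = ∑ c ∈ Finset.univ.filter (fun c => X.dist u c = i),
          (X.adjMatrix ℝ) w₂ c * x c / x w₂

/-- Perfect state transfer from `u` to `v` at time `t`:
`|(exp (i t A))_{v,u}| = 1`. -/
noncomputable def PST [Fintype V] [DecidableEq V] (X : SimpleGraph V) [DecidableRel X.Adj]
    (u v : V) (t : ℝ) : Prop :=
  ‖(NormedSpace.exp ((Complex.I * (t : ℂ)) • X.adjMatrix ℂ)) v u‖ = 1

/-- `X` is distance-regular: there are intersection numbers `a i`, `b i`, `c i` such that
any vertex `w` at distance `i` from `u` has exactly `c i` neighbours at distance `i - 1`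
from `u`, `a i` neighbours at distance `i`, and `b i` neighbours at distance `i + 1`. -/
noncomputable def IsDistanceRegular [Fintype V] (X : SimpleGraph V) [DecidableRel X.Adj] :
    Prop :=
  ∃ a b c : ℕ → ℕ, ∀ (i : ℕ) (u w : V), X.dist u w = i →
    (Finset.univ.filter (fun z => X.Adj w z ∧ X.dist u z + 1 = i)).card = c i ∧
    (Finset.univ.filter (fun z => X.Adj w z ∧ X.dist u z = i)).card = a i ∧
    (Finset.univ.filter (fun z => X.Adj w z ∧ X.dist u z = i + 1)).card = b i


section AuxSpec

variable [Fintype V] [DecidableEq V] {X : SimpleGraph V} [DecidableRel X.Adj]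
  {d : ℕ} {θ : Fin (d + 1) → ℝ} {E : Fin (d + 1) → Matrix V V ℝ}

lemma specAux_sum_mulVec {ι : Type*} (s : Finset ι) (M : ι → Matrix V V ℝ) (x : V → ℝ) :
    (∑ i ∈ s, M i) *ᵥ x = ∑ i ∈ s, M i *ᵥ x := by
  funext w
  simp [Matrix.mulVec, dotProduct, Matrix.sum_apply, Finset.sum_mul]
  rw [Finset.sum_comm]

lemma specAux_pow (h : SpectralDecomp X d θ E) (n : ℕ) :
    (X.adjMatrix ℝ) ^ n = ∑ r, (θ r) ^ n • E r := by
  induction n with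
  | zero => simp [h.sum_eq_one]
  | succ n ih =>
    rw [pow_succ, ih, h.decomp, Finset.sum_mul]
    refine Finset.sum_congr rfl fun r _ => ?_
    rw [Finset.mul_sum, Finset.sum_eq_single r]
    · rw [Matrix.smul_mul, Matrix.mul_smul, h.orth, if_pos rfl, smul_smul, ← pow_succ]
    · intro s _ hs
      rw [Matrix.smul_mul, Matrix.mul_smul, h.orth, if_neg (fun e => hs e.symm)]
      simp
    · simp

lemma specAux_aeval (h : SpectralDecomp X d θ E) (p : Polynomial ℝ) :
    (aeval (X.adjMatrix ℝ)) p = ∑ r, p.eval (θ r) • E r := by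
  rw [aeval_eq_sum_range]
  simp_rw [specAux_pow h, Finset.smul_sum, smul_smul]
  rw [Finset.sum_comm]
  refine Finset.sum_congr rfl fun r _ => ?_
  rw [eval_eq_sum_range, Finset.sum_smul]

lemma specAux_mul (h : SpectralDecomp X d θ E) (p : Polynomial ℝ) (s : Fin (d + 1)) :
    E s * (aeval (X.adjMatrix ℝ)) p = p.eval (θ s) • E s := by
  rw [specAux_aeval h, Finset.mul_sum, Finset.sum_eq_single s]
  · rw [Matrix.mul_smul, h.orth, if_pos rfl]
  · intro r _ hr
    rw [Matrix.mul_smul, h.orth, if_neg (fun e => hr e.symm)]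
    simp
  · simp

lemma specAux_diag (h : SpectralDecomp X d θ E) (r : Fin (d + 1)) (u : V) :
    E r u u = ∑ w, (E r w u) ^ 2 := by
  have h1 : E r u u = (E r * E r) u u := by rw [h.orth, if_pos rfl]
  rw [h1, Matrix.mul_apply]
  refine Finset.sum_congr rfl fun w _ => ?_
  have hsym : E r u w = E r w u := by
    conv_lhs => rw [← h.symm r, Matrix.transpose_apply]
  rw [hsym]; ring

lemma specAux_vec_zero (h : SpectralDecomp X d θ E) (r : Fin (d + 1)) (u : V) :
    E r *ᵥ eVec u = 0 ↔ E r u u = 0 := by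
  rw [specAux_diag h]
  constructor
  · intro hz
    refine Finset.sum_eq_zero fun w _ => ?_
    have hw := congrFun hz w
    simp [eVec, Matrix.mulVec_single] at hw
    simp [hw]
  · intro hz
    funext w
    have hsum := (Finset.sum_eq_zero_iff_of_nonneg
      (fun w _ => sq_nonneg (E r w u))).mp hz w (Finset.mem_univ w)
    have h2 : E r w u = 0 := by nlinarith [sq_nonneg (E r w u)]
    simp [eVec, Matrix.mulVec_single, h2]

lemma specAux_key (h : SpectralDecomp X d θ E) {u v : V} (hco : Cospectral E u v)
    (p : Polynomial ℝ) (hp : (aeval (X.adjMatrix ℝ)) p *ᵥ eVec u = eVec v) :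
    (∀ r, E r *ᵥ eVec v = p.eval (θ r) • (E r *ᵥ eVec u)) ∧
    (∀ r, E r *ᵥ eVec u ≠ 0 → p.eval (θ r) = 1 ∨ p.eval (θ r) = -1) ∧
    (∀ r, E r *ᵥ eVec u = 0 → E r *ᵥ eVec v = 0) ∧
    (aeval (X.adjMatrix ℝ)) p *ᵥ eVec v = eVec u := by
  have h1 : ∀ r, E r *ᵥ eVec v = p.eval (θ r) • (E r *ᵥ eVec u) := by
    intro r
    rw [← hp, Matrix.mulVec_mulVec, specAux_mul h, Matrix.smul_mulVec]
  have h2 : ∀ r, E r v v = (p.eval (θ r)) ^ 2 * E r u u := by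
    intro r
    rw [specAux_diag h, specAux_diag h, Finset.mul_sum]
    refine Finset.sum_congr rfl fun w _ => ?_
    have hw := congrFun (h1 r) w
    simp [eVec, Matrix.mulVec_single] at hw
    rw [hw]; ring
  have h3 : ∀ r, E r *ᵥ eVec u ≠ 0 → p.eval (θ r) = 1 ∨ p.eval (θ r) = -1 := by
    intro r hr
    have hd : E r u u ≠ 0 := fun hz => hr ((specAux_vec_zero h r u).mpr hz)
    have hE : E r u u = (p.eval (θ r)) ^ 2 * E r u u := by rw [← h2 r, hco r]
    have hsq : (p.eval (θ r)) ^ 2 = 1 :=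
      mul_right_cancel₀ hd (by rw [one_mul]; exact hE.symm)
    exact mul_self_eq_one_iff.mp (by nlinarith [hsq])
  have h4 : ∀ r, E r *ᵥ eVec u = 0 → E r *ᵥ eVec v = 0 := by
    intro r hr
    rw [specAux_vec_zero h]
    rw [← hco r, ← (specAux_vec_zero h r u).mp hr]
  refine ⟨h1, h3, h4, ?_⟩
  have h6 : ∀ r, (p.eval (θ r) • E r) *ᵥ eVec v = E r *ᵥ eVec u := by
    intro r
    rw [Matrix.smul_mulVec, h1 r, smul_smul]
    by_cases hr : E r *ᵥ eVec u = 0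
    · rw [hr]; simp
    · rcases h3 r hr with hc | hc <;> rw [hc] <;> simp
  rw [specAux_aeval h, specAux_sum_mulVec, Finset.sum_congr rfl fun r _ => h6 r,
    ← specAux_sum_mulVec, h.sum_eq_one, Matrix.one_mulVec]

end AuxSpec

variable [Fintype V] [DecidableEq V]

/-- `u, v` are cospectral with a polynomial `p(A) e_u = e_v` iff they are
strongly cospectral; moreover if they are cospectral, any such `p` satisfies
`p(A) e_v = e_u` and `p(θ_r) = ±1` on `Φ_u`. -/
theorem stmt_5 (X : SimpleGraph V) [DecidableRel X.Adj] (hconn : X.Connected)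
    {d : ℕ} (θ : Fin (d + 1) → ℝ) (E : Fin (d + 1) → Matrix V V ℝ)
    (hspec : SpectralDecomp X d θ E) (u v : V) :
    ((Cospectral E u v ∧
        ∃ p : Polynomial ℝ, (aeval (X.adjMatrix ℝ) p) *ᵥ eVec u = eVec v) ↔
      StronglyCospectral E u v) ∧
    (Cospectral E u v →
      ∀ p : Polynomial ℝ, (aeval (X.adjMatrix ℝ) p) *ᵥ eVec u = eVec v →
        (aeval (X.adjMatrix ℝ) p) *ᵥ eVec v = eVec u ∧
        ∀ r ∈ suppIdx E u, p.eval (θ r) = 1 ∨ p.eval (θ r) = -1)  := by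
  classical
  have hmain : Cospectral E u v →
      ∀ p : Polynomial ℝ, (aeval (X.adjMatrix ℝ)) p *ᵥ eVec u = eVec v →
        (aeval (X.adjMatrix ℝ)) p *ᵥ eVec v = eVec u ∧
        ∀ r ∈ suppIdx E u, p.eval (θ r) = 1 ∨ p.eval (θ r) = -1 := by
    intro hco p hp
    obtain ⟨h1, h3, h4, h5⟩ := specAux_key hspec hco p hp
    refine ⟨h5, fun r hr => ?_⟩
    simp only [suppIdx, Finset.mem_filter, Finset.mem_univ, true_and] at hr
    exact h3 r hr
  constructor
  · constructor
    · rintro ⟨hco, p, hp⟩ r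
      obtain ⟨h1, h3, h4, h5⟩ := specAux_key hspec hco p hp
      by_cases hr : E r *ᵥ eVec u = 0
      · left; rw [h4 r hr, hr]
      · rcases h3 r hr with hc | hc
        · left; rw [h1 r, hc, one_smul]
        · right; rw [h1 r, hc, neg_smul, one_smul]
    · intro hsc
      have hco : Cospectral E u v := by
        intro r
        rw [specAux_diag hspec, specAux_diag hspec]
        refine Finset.sum_congr rfl fun w _ => ?_
        rcases hsc r with hc | hc <;>
        · have hw := congrFun hc w
          simp [eVec, Matrix.mulVec_single] at hw
          rw [hw]; try ring
      refine ⟨hco, ?_⟩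
      have hinj : Set.InjOn θ ↑(Finset.univ : Finset (Fin (d + 1))) := by
        intro a _ b _ hab
        by_contra hne
        rcases lt_or_gt_of_ne hne with hlt | hlt
        · exact (ne_of_gt (hspec.strict_anti a b hlt)) hab
        · exact (ne_of_gt (hspec.strict_anti b a hlt)) hab.symm
      set σ : Fin (d + 1) → ℝ :=
        fun r => if E r *ᵥ eVec v = E r *ᵥ eVec u then 1 else -1 with hσ
      refine ⟨Lagrange.interpolate Finset.univ θ σ, ?_⟩
      have heval : ∀ r, (Lagrange.interpolate Finset.univ θ σ).eval (θ r) = σ r :=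
        fun r => Lagrange.eval_interpolate_at_node σ hinj (Finset.mem_univ r)
      have h6 : ∀ r, ((Lagrange.interpolate Finset.univ θ σ).eval (θ r) • E r) *ᵥ eVec u
          = E r *ᵥ eVec v := by
        intro r
        rw [heval r, Matrix.smul_mulVec]
        by_cases hcase : E r *ᵥ eVec v = E r *ᵥ eVec u
        · simp only [hσ]
          rw [if_pos hcase, one_smul, hcase]
        · simp only [hσ]
          rw [if_neg hcase]
          rcases hsc r with hc | hc
          · exact absurd hc hcase
          · rw [hc]; simp
      rw [specAux_aeval hspec, specAux_sum_mulVec, Finset.sum_congr rfl fun r _ => h6 r,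
        ← specAux_sum_mulVec, hspec.sum_eq_one, Matrix.one_mulVec]
  · exact hmain
end

section
/- If u and v are antipodal vertices of X, then u and v are spectrally extremal vertices and u and v are strongly cospectral. -/
open Matrix Finset Polynomial

variable {V : Type*}

variable [Fintype V] [DecidableEq V]


set_option linter.unusedSectionVars false
set_option maxHeartbeats 1000000

@[simp] lemma eVec_def (u : V) : eVec u = Pi.single u 1 := rfl

variable {X : SimpleGraph V} [DecidableRel X.Adj] {d : ℕ}
    {θ : Fin (d + 1) → ℝ} {E : Fin (d + 1) → Matrix V V ℝ}

lemma pow_decomp (h : SpectralDecomp X d θ E) (n : ℕ) :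
    X.adjMatrix ℝ ^ n = ∑ r, θ r ^ n • E r := by
  induction n with
  | zero => simpa using h.sum_eq_one.symm
  | succ n ih =>
    rw [pow_succ, ih, h.decomp, Finset.sum_mul_sum]
    have key : ∀ r s : Fin (d+1), (θ r ^ n • E r) * (θ s • E s)
        = if r = s then (θ r ^ n * θ s) • E r else 0 := by
      intro r s
      rw [smul_mul_assoc, mul_smul_comm, h.orth, smul_smul]
      split <;> simp
    refine Finset.sum_congr rfl fun r _ => ?_
    rw [Finset.sum_congr rfl fun s _ => key r s, Finset.sum_ite_eq, if_pos (Finset.mem_univ r),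
      pow_succ]

lemma aeval_decomp (h : SpectralDecomp X d θ E) (p : ℝ[X]) :
    aeval (X.adjMatrix ℝ) p = ∑ r, p.eval (θ r) • E r := by
  induction p using Polynomial.induction_on' with
  | add p q hp hq => simp [hp, hq, Finset.sum_add_distrib, add_smul]
  | monomial n a =>
      rw [aeval_monomial, pow_decomp h n, Finset.mul_sum]
      refine Finset.sum_congr rfl fun r _ => ?_
      rw [eval_monomial, Algebra.algebraMap_eq_smul_one, smul_mul_assoc, one_mul, smul_smul]

lemma theta_inj (h : SpectralDecomp X d θ E) : Function.Injective θ := by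
  intro r s hrs
  by_contra hne
  rcases lt_or_gt_of_ne hne with hlt | hlt
  · exact (ne_of_gt (h.strict_anti r s hlt)) hrs
  · exact (ne_of_lt (h.strict_anti s r hlt)) hrs

lemma sum_mulVec' {ι : Type*} (s : Finset ι) (M : ι → Matrix V V ℝ) (y : V → ℝ) :
    (∑ i ∈ s, M i) *ᵥ y = ∑ i ∈ s, (M i *ᵥ y) := by
  ext w
  simp only [Matrix.mulVec, dotProduct, Matrix.sum_apply, Finset.sum_mul,
    Finset.sum_apply]
  rw [Finset.sum_comm]

lemma mulVec_sum' {ι : Type*} (s : Finset ι) (M : Matrix V V ℝ) (y : ι → (V → ℝ)) :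
    M *ᵥ (∑ i ∈ s, y i) = ∑ i ∈ s, (M *ᵥ y i) := by
  ext w
  simp only [Matrix.mulVec, dotProduct, Finset.sum_apply, Finset.mul_sum]
  rw [Finset.sum_comm]

lemma mem_supp {u : V} {r : Fin (d+1)} :
    r ∈ suppIdx E u ↔ E r *ᵥ (Pi.single u 1 : V → ℝ) ≠ 0 := by
  classical simp [suppIdx, eVec]

lemma not_mem_supp {u : V} {r : Fin (d+1)} (hr : r ∉ suppIdx E u) :
    E r *ᵥ (Pi.single u 1 : V → ℝ) = 0 := by
  by_contra hc
  exact hr (mem_supp.mpr hc)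

lemma mulVec_pow_supp (h : SpectralDecomp X d θ E) (u : V) (n : ℕ) :
    (X.adjMatrix ℝ ^ n) *ᵥ (Pi.single u 1 : V → ℝ)
      = ∑ r ∈ suppIdx E u, θ r ^ n • (E r *ᵥ (Pi.single u 1 : V → ℝ)) := by
  classical
  rw [pow_decomp h n]
  rw [show ((∑ r, θ r ^ n • E r) *ᵥ (Pi.single u 1 : V → ℝ))
      = ∑ r, θ r ^ n • (E r *ᵥ (Pi.single u 1 : V → ℝ)) by
    rw [sum_mulVec']
    exact Finset.sum_congr rfl fun r _ => Matrix.smul_mulVec _ _ _]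
  symm
  apply Finset.sum_subset (Finset.subset_univ _)
  intro r _ hr
  rw [not_mem_supp hr, smul_zero]

lemma single_eq_sum_supp (h : SpectralDecomp X d θ E) (u : V) :
    (Pi.single u 1 : V → ℝ) = ∑ r ∈ suppIdx E u, E r *ᵥ (Pi.single u 1 : V → ℝ) := by
  have h0 := mulVec_pow_supp h u 0
  rw [pow_zero, Matrix.one_mulVec] at h0
  exact h0.trans (Finset.sum_congr rfl fun r _ => by rw [pow_zero, one_smul])

lemma supp_nonempty (h : SpectralDecomp X d θ E) (u : V) : (suppIdx E u).Nonempty := by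
  rcases Finset.eq_empty_or_nonempty (suppIdx E u) with he | hne
  · exfalso
    have h0 := single_eq_sum_supp h u
    rw [he, Finset.sum_empty] at h0
    have := congrFun h0 u
    simp at this
  · exact hne

lemma mulVec_aeval_supp (h : SpectralDecomp X d θ E) (u : V) (p : ℝ[X]) :
    (aeval (X.adjMatrix ℝ) p) *ᵥ (Pi.single u 1 : V → ℝ)
      = ∑ r ∈ suppIdx E u, p.eval (θ r) • (E r *ᵥ (Pi.single u 1 : V → ℝ)) := by
  classical
  rw [aeval_decomp h p]
  rw [show ((∑ r, p.eval (θ r) • E r) *ᵥ (Pi.single u 1 : V → ℝ))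
      = ∑ r, p.eval (θ r) • (E r *ᵥ (Pi.single u 1 : V → ℝ)) by
    rw [sum_mulVec']
    exact Finset.sum_congr rfl fun r _ => Matrix.smul_mulVec _ _ _]
  symm
  apply Finset.sum_subset (Finset.subset_univ _)
  intro r _ hr
  rw [not_mem_supp hr, smul_zero]

lemma supp_linearIndependent (h : SpectralDecomp X d θ E) (u : V) :
    LinearIndependent ℝ (fun r : (suppIdx E u : Finset (Fin (d+1))) =>
      E r *ᵥ (Pi.single u 1 : V → ℝ)) := by
  classical
  rw [Fintype.linearIndependent_iff]
  intro g hg s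
  have h2 := congrArg (fun y => E (s : Fin (d+1)) *ᵥ y) hg
  simp only [Matrix.mulVec_zero] at h2
  rw [show E (s : Fin (d+1)) *ᵥ (∑ r : (suppIdx E u : Finset (Fin (d+1))),
        g r • (E (r : Fin (d+1)) *ᵥ (Pi.single u 1 : V → ℝ)))
      = ∑ r : (suppIdx E u : Finset (Fin (d+1))),
        g r • ((E (s : Fin (d+1)) * E (r : Fin (d+1))) *ᵥ (Pi.single u 1 : V → ℝ)) by
    rw [mulVec_sum']
    exact Finset.sum_congr rfl fun r _ => by
      rw [Matrix.mulVec_smul, Matrix.mulVec_mulVec]] at h2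
  have h3 : ∀ r : (suppIdx E u : Finset (Fin (d+1))),
      g r • ((E (s : Fin (d+1)) * E (r : Fin (d+1))) *ᵥ (Pi.single u 1 : V → ℝ))
      = if r = s then g r • (E (s : Fin (d+1)) *ᵥ (Pi.single u 1 : V → ℝ)) else 0 := by
    intro r
    rw [h.orth]
    by_cases hrs : r = s
    · subst hrs; simp
    · have : ¬((s : Fin (d+1)) = (r : Fin (d+1))) := fun hc => hrs (Subtype.ext hc.symm)
      simp only [this, if_false, Matrix.zero_mulVec, smul_zero, hrs]
  rw [Finset.sum_congr rfl fun r _ => h3 r, Finset.sum_ite_eq' Finset.univ s,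
    if_pos (Finset.mem_univ s)] at h2
  by_contra hgs
  rcases smul_eq_zero.mp h2 with hc | hc
  · exact hgs hc
  · exact (mem_supp.mp s.2) hc

lemma pow_entry_zero (X : SimpleGraph V) [DecidableRel X.Adj] {w u : V} {n : ℕ}
    (hn : n < X.dist w u) : (X.adjMatrix ℝ ^ n) w u = 0 := by
  rw [SimpleGraph.adjMatrix_pow_apply_eq_card_walk]
  have : IsEmpty {p : X.Walk w u | p.length = n} := by
    constructor
    rintro ⟨p, hp⟩
    simp only [Set.mem_setOf_eq] at hp
    have := SimpleGraph.dist_le p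
    omega
  haveI : IsEmpty { x : X.Walk w u // x.length = n } := this
  simp

lemma pow_entry_pos (X : SimpleGraph V) [DecidableRel X.Adj] {w u : V}
    (hr : X.Reachable w u) : (X.adjMatrix ℝ ^ (X.dist w u)) w u ≠ 0 := by
  rw [SimpleGraph.adjMatrix_pow_apply_eq_card_walk]
  obtain ⟨p, hp⟩ := hr.exists_walk_length_eq_dist
  have : Nonempty {p : X.Walk w u | p.length = X.dist w u} := ⟨⟨p, hp⟩⟩
  have hpos := Fintype.card_pos (α := {p : X.Walk w u | p.length = X.dist w u})
  positivity

lemma aeval_entry_zero (X : SimpleGraph V) [DecidableRel X.Adj] (p : ℝ[X]) (w u : V)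
    (hdeg : ∀ k, k ≤ p.natDegree → (X.adjMatrix ℝ ^ k) w u = 0) :
    ((aeval (X.adjMatrix ℝ) p) *ᵥ (Pi.single u 1 : V → ℝ)) w = 0 := by
  rw [Polynomial.aeval_eq_sum_range, sum_mulVec']
  rw [Finset.sum_apply]
  refine Finset.sum_eq_zero fun i hi => ?_
  rw [Matrix.smul_mulVec, Matrix.mulVec_single_one, Pi.smul_apply]
  have : (X.adjMatrix ℝ ^ i) w u = 0 := hdeg i (by
    simpa [Nat.lt_succ_iff] using Finset.mem_range.mp hi)
  simp [this]

lemma aeval_mulVec_mem (X : SimpleGraph V) [DecidableRel X.Adj] (p : ℝ[X]) (y : V → ℝ)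
    (M : Submodule ℝ (V → ℝ)) (hM : ∀ k : ℕ, (X.adjMatrix ℝ ^ k) *ᵥ y ∈ M) :
    (aeval (X.adjMatrix ℝ) p) *ᵥ y ∈ M := by
  rw [Polynomial.aeval_eq_sum_range, sum_mulVec']
  exact Submodule.sum_mem M fun i _ => by
    rw [Matrix.smul_mulVec]
    exact M.smul_mem _ (hM i)

lemma proj_eq_aeval (h : SpectralDecomp X d θ E) (u : V) {r : Fin (d+1)}
    (hr : r ∈ suppIdx E u) :
    E r *ᵥ (Pi.single u 1 : V → ℝ)
      = (aeval (X.adjMatrix ℝ) (Lagrange.basis (suppIdx E u) θ r)) *ᵥ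
          (Pi.single u 1 : V → ℝ) := by
  classical
  rw [mulVec_aeval_supp h u]
  have hinj : Set.InjOn θ (suppIdx E u) := fun a _ b _ hab => theta_inj h hab
  rw [Finset.sum_congr rfl (fun s hs => ?_)]
  · rw [Finset.sum_ite_eq' (suppIdx E u) r, if_pos hr]
  · by_cases hsr : s = r
    · subst hsr
      rw [Lagrange.eval_basis_self hinj hs, if_pos rfl, one_smul]
    · rw [Lagrange.eval_basis_of_ne (fun hc => hsr hc.symm) hs, if_neg hsr, zero_smul]

lemma proj_diag_eq_dot (h : SpectralDecomp X d θ E) (s : Fin (d+1)) (a : V) :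
    E s a a = (E s *ᵥ (Pi.single a 1 : V → ℝ)) ⬝ᵥ (E s *ᵥ (Pi.single a 1 : V → ℝ)) := by
  have h1 : E s = E s * E s := by rw [h.orth s s, if_pos rfl]
  have hsym : ∀ i j, E s i j = E s j i := fun i j => by
    conv_lhs => rw [← h.symm s]
    rfl
  conv_lhs => rw [h1]
  rw [Matrix.mul_apply, Matrix.mulVec_single_one, dotProduct]
  exact Finset.sum_congr rfl fun w _ => by simp only [Matrix.col_apply]; rw [hsym a w]

/-- Antipodal vertices are spectrally extremal and strongly cospectral. -/
theorem stmt_6 (X : SimpleGraph V) [DecidableRel X.Adj] (hconn : X.Connected)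
    {d : ℕ} (θ : Fin (d + 1) → ℝ) (E : Fin (d + 1) → Matrix V V ℝ)
    (hspec : SpectralDecomp X d θ E) (u v : V)
    (hant : Antipodal X θ E u v) :
    SpectrallyExtremal X E u ∧ SpectrallyExtremal X E v ∧ StronglyCospectral E u v := by
  classical
  obtain ⟨hcos, -, -, hduv, hdvv, hsingu, hsingv, x, hxpos, -, hequit⟩ := hant
  set A := X.adjMatrix ℝ with hA
  set ε := ecc X u with hε
  have hdle : ∀ w, X.dist u w ≤ ε := fun w => Finset.le_sup (Finset.mem_univ w)
  have hxne : ∀ w, x w ≠ 0 := fun w => ne_of_gt (hxpos w)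
  set z : ℕ → (V → ℝ) := fun i w => if X.dist u w = i then x w else 0 with hzdef
  set M : Submodule ℝ (V → ℝ) :=
    Submodule.span ℝ (Set.range fun i : Fin (ε+1) => z i) with hM
  have hzmem : ∀ i : Fin (ε+1), z i ∈ M := fun i => Submodule.subset_span ⟨i, rfl⟩
  -- step 1 : A *ᵥ z i ∈ M for each i, via the pseudo equitable partition
  have hAzw : ∀ (i : ℕ) (w : V), (A *ᵥ z i) w
      = ∑ c ∈ Finset.univ.filter (fun c => X.dist u c = i), A w c * x c := by
    intro i w
    rw [Finset.sum_filter]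
    simp only [Matrix.mulVec, dotProduct, hzdef]
    exact Finset.sum_congr rfl fun c _ => by split <;> simp
  have repr : ∀ i : ℕ, ∃ B : ℕ → ℝ, ∀ w, (A *ᵥ z i) w = B (X.dist u w) * x w := by
    intro i
    refine ⟨fun j => if h : ∃ w, X.dist u w = j then
      (A *ᵥ z i) h.choose / x h.choose else 0, fun w => ?_⟩
    have hex : ∃ w', X.dist u w' = X.dist u w := ⟨w, rfl⟩
    simp only [dif_pos hex]
    set w₀ := hex.choose with hw₀def
    have hw₀ : X.dist u w₀ = X.dist u w := hex.choose_spec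
    have heq := hequit i w w₀ hw₀.symm
    rw [← Finset.sum_div, ← Finset.sum_div, ← hAzw i w, ← hAzw i w₀] at heq
    have hcalc : (A *ᵥ z i) w = ((A *ᵥ z i) w / x w) * x w := by
      rw [div_mul_eq_mul_div, mul_div_assoc, div_self (hxne w), mul_one]
    rw [hcalc, heq]
  have hAz : ∀ i : Fin (ε+1), A *ᵥ z ↑i ∈ M := by
    intro i
    obtain ⟨B, hB⟩ := repr ↑i
    have hrep : A *ᵥ z ↑i = ∑ j : Fin (ε+1), B ↑j • z ↑j := by
      funext w
      have hw : X.dist u w ≤ ε := hdle w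
      set j₀ : Fin (ε+1) := ⟨X.dist u w, Nat.lt_succ_of_le hw⟩ with hj₀
      rw [hB w, Finset.sum_apply]
      have hterm : ∀ j : Fin (ε+1), (B ↑j • z ↑j) w
          = if j = j₀ then B (X.dist u w) * x w else 0 := by
        intro j
        simp only [Pi.smul_apply, hzdef, smul_eq_mul]
        by_cases hj : X.dist u w = ↑j
        · rw [if_pos hj, if_pos (Fin.ext (by simp [hj₀, hj])), ← hj]
        · rw [if_neg hj, mul_zero, if_neg (fun hc => hj (by rw [hc]))]
      rw [Finset.sum_congr rfl fun j _ => hterm j, Finset.sum_ite_eq' Finset.univ j₀,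
        if_pos (Finset.mem_univ j₀)]
    rw [hrep]
    exact Submodule.sum_mem M fun j _ => M.smul_mem _ (hzmem j)
  have hinv : ∀ y ∈ M, A *ᵥ y ∈ M := by
    intro y hy
    have hle : M ≤ M.comap (Matrix.mulVecLin A) := by
      rw [hM, Submodule.span_le]
      rintro _ ⟨i, rfl⟩
      simpa [Matrix.mulVecLin_apply] using hAz i
    simpa [Matrix.mulVecLin_apply] using hle hy
  -- basis vectors in M
  have hz0 : z 0 = x u • (Pi.single u 1 : V → ℝ) := by
    funext w
    simp only [hzdef, Pi.smul_apply, smul_eq_mul, Pi.single_apply]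
    simp only [hconn.dist_eq_zero_iff]
    by_cases hw : w = u
    · subst hw; simp
    · rw [if_neg (fun hc => hw hc.symm), if_neg hw, mul_zero]
  have hzε : z ε = x v • (Pi.single v 1 : V → ℝ) := by
    funext w
    simp only [hzdef, Pi.smul_apply, smul_eq_mul, Pi.single_apply]
    by_cases hw : w = v
    · subst hw; rw [if_pos (by rw [hduv]), if_pos rfl, mul_one]
    · rw [if_neg (fun hc => hw (hsingu w (by rw [hc, hduv]))), if_neg hw, mul_zero]
  have hu_mem : (Pi.single u 1 : V → ℝ) ∈ M := by
    have h0 : z ↑(0 : Fin (ε+1)) ∈ M := hzmem 0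
    rw [show ((0 : Fin (ε+1)) : ℕ) = 0 from rfl, hz0] at h0
    have := M.smul_mem (x u)⁻¹ h0
    rwa [smul_smul, inv_mul_cancel₀ (hxne u), one_smul] at this
  have hv_mem : (Pi.single v 1 : V → ℝ) ∈ M := by
    have h0 : z ↑(Fin.last ε) ∈ M := hzmem (Fin.last ε)
    rw [Fin.val_last, hzε] at h0
    have := M.smul_mem (x v)⁻¹ h0
    rwa [smul_smul, inv_mul_cancel₀ (hxne v), one_smul] at this
  have hpow : ∀ n : ℕ, (A ^ n) *ᵥ (Pi.single u 1 : V → ℝ) ∈ M := by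
    intro n
    induction n with
    | zero => rw [pow_zero, Matrix.one_mulVec]; exact hu_mem
    | succ n ih =>
        rw [pow_succ', ← Matrix.mulVec_mulVec]
        exact hinv _ ih
  have hproj_mem : ∀ r ∈ suppIdx E u, E r *ᵥ (Pi.single u 1 : V → ℝ) ∈ M := by
    intro r hr
    rw [proj_eq_aeval hspec u hr]
    exact aeval_mulVec_mem X _ _ M hpow
  -- cardinality bounds
  have hsupp_ne := supp_nonempty hspec u
  have li := supp_linearIndependent hspec u
  have hcard_le : (suppIdx E u).card ≤ ε + 1 := by
    have liM : LinearIndependent ℝ (fun r : (suppIdx E u : Finset (Fin (d+1))) =>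
        (⟨E ↑r *ᵥ (Pi.single u 1 : V → ℝ), hproj_mem ↑r r.2⟩ : M)) :=
      LinearIndependent.of_comp M.subtype li
    have h1 := liM.fintype_card_le_finrank
    rw [Fintype.card_coe] at h1
    refine h1.trans ?_
    have h2 := finrank_range_le_card (R := ℝ) (fun i : Fin (ε+1) => z ↑i)
    rw [Fintype.card_fin] at h2
    exact h2
  have hε_lt : ε < (suppIdx E u).card := by
    by_contra hge
    push_neg at hge
    obtain ⟨w, -, hwsup⟩ := Finset.exists_mem_eq_sup Finset.univ
      ⟨u, Finset.mem_univ u⟩ (fun w => X.dist u w)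
    have hw : X.dist u w = ε := hwsup.symm
    have hdwu : X.dist w u = ε := by rw [SimpleGraph.dist_comm]; exact hw
    have hne0 : (A ^ ε) w u ≠ 0 := by
      have := pow_entry_pos X (hconn w u)
      rwa [hdwu] at this
    have hval : ((A ^ ε) *ᵥ (Pi.single u 1 : V → ℝ)) w = (A ^ ε) w u := by
      rw [Matrix.mulVec_single_one]
      rfl
    have hzero : ((A ^ ε) *ᵥ (Pi.single u 1 : V → ℝ)) w = 0 := by
      rw [mulVec_pow_supp hspec u ε, Finset.sum_apply]
      refine Finset.sum_eq_zero fun r hr => ?_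
      have hEw : (E r *ᵥ (Pi.single u 1 : V → ℝ)) w = 0 := by
        rw [proj_eq_aeval hspec u hr]
        refine aeval_entry_zero X _ w u fun k hk => ?_
        refine pow_entry_zero X ?_
        have hdeg : (Lagrange.basis (suppIdx E u) θ r).natDegree
            = (suppIdx E u).card - 1 :=
          Lagrange.natDegree_basis (fun a _ b _ hab => theta_inj hspec hab) hr
        rw [hdeg] at hk
        have h1 : 1 ≤ (suppIdx E u).card := Finset.card_pos.mpr hsupp_ne
        rw [hdwu]
        omega
      rw [Pi.smul_apply, hEw, smul_zero]
    exact hne0 (by rw [← hval, hzero])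
  have hcard : (suppIdx E u).card = ε + 1 := le_antisymm hcard_le hε_lt
  have hext_u : SpectrallyExtremal X E u := by
    rw [SpectrallyExtremal, dualDeg, hcard]
    omega
  -- strong cospectrality
  set U : Submodule ℝ (V → ℝ) := Submodule.span ℝ
    (Set.range fun r : (suppIdx E u : Finset (Fin (d+1))) =>
      E ↑r *ᵥ (Pi.single u 1 : V → ℝ)) with hU
  have hUM : U ≤ M := by
    rw [hU, Submodule.span_le]
    rintro _ ⟨r, rfl⟩
    exact hproj_mem ↑r r.2
  have hUeq : U = M := by
    refine Submodule.eq_of_le_of_finrank_le hUM ?_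
    have h1 : Module.finrank ℝ U = (suppIdx E u).card := by
      rw [hU, finrank_span_eq_card li, Fintype.card_coe]
    have h2 : Module.finrank ℝ M ≤ ε + 1 := by
      have h3 := finrank_range_le_card (R := ℝ) (fun i : Fin (ε+1) => z ↑i)
      rw [Fintype.card_fin] at h3
      exact h3
    rw [h1, hcard]
    exact h2
  have hv_in_U : (Pi.single v 1 : V → ℝ) ∈ U := hUeq ▸ hv_mem
  obtain ⟨c, hc⟩ := (Submodule.mem_span_range_iff_exists_fun ℝ).mp hv_in_U
  have hlam : ∀ s : Fin (d+1), E s *ᵥ (Pi.single v 1 : V → ℝ)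
      = (if hs : s ∈ suppIdx E u then c ⟨s, hs⟩ else 0)
        • (E s *ᵥ (Pi.single u 1 : V → ℝ)) := by
    intro s
    by_cases hs : s ∈ suppIdx E u
    · rw [dif_pos hs, ← hc, mulVec_sum']
      have hterm : ∀ r : (suppIdx E u : Finset (Fin (d+1))),
          E s *ᵥ (c r • (E ↑r *ᵥ (Pi.single u 1 : V → ℝ)))
          = if r = (⟨s, hs⟩ : {y // y ∈ suppIdx E u}) then
              c r • (E s *ᵥ (Pi.single u 1 : V → ℝ)) else 0 := by
        intro r
        rw [Matrix.mulVec_smul, Matrix.mulVec_mulVec, hspec.orth]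
        by_cases hr : r = (⟨s, hs⟩ : {y // y ∈ suppIdx E u})
        · rw [if_pos (by rw [hr]), if_pos hr]
        · rw [if_neg (fun hc' => hr (Subtype.ext hc'.symm)), if_neg hr,
            Matrix.zero_mulVec, smul_zero]
      rw [Finset.sum_congr rfl fun r _ => hterm r,
        Finset.sum_ite_eq' Finset.univ (⟨s, hs⟩ : {y // y ∈ suppIdx E u}),
        if_pos (Finset.mem_univ _)]
    · rw [dif_neg hs, zero_smul, ← hc, mulVec_sum']
      refine Finset.sum_eq_zero fun r _ => ?_
      rw [Matrix.mulVec_smul, Matrix.mulVec_mulVec, hspec.orth,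
        if_neg (fun hc' => hs (by rw [hc']; exact r.2)), Matrix.zero_mulVec, smul_zero]
  have hsc : StronglyCospectral E u v := by
    intro s
    set cs := (if hs : s ∈ suppIdx E u then c ⟨s, hs⟩ else 0) with hcs
    have hnorm : E s v v = cs * cs * E s u u := by
      rw [proj_diag_eq_dot hspec s v, hlam s, ← hcs, smul_dotProduct,
        dotProduct_smul, ← proj_diag_eq_dot hspec s u, smul_eq_mul, smul_eq_mul]
      ring
    by_cases hs : s ∈ suppIdx E u
    · have hEu_ne : E s u u ≠ 0 := by
        intro h0
        exact (mem_supp.mp hs)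
          (dotProduct_self_eq_zero.mp (by rw [← proj_diag_eq_dot hspec s u]; exact h0))
      have hcs1 : cs * cs = 1 := by
        have h1 := hcos s
        rw [hnorm] at h1
        have h2 : (1 : ℝ) * E s u u = (cs * cs) * E s u u := by rw [one_mul]; exact h1
        exact (mul_right_cancel₀ hEu_ne h2).symm
      rcases mul_self_eq_one_iff.mp hcs1 with h1 | h1
      · left
        have h2 := hlam s
        rw [← hcs, h1, one_smul] at h2
        exact h2
      · right
        have h2 := hlam s
        rw [← hcs, h1, neg_one_smul] at h2
        exact h2
    · left
      have hEu : E s *ᵥ (Pi.single u 1 : V → ℝ) = 0 := not_mem_supp hs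
      have h2 := hlam s
      rw [← hcs, hEu, smul_zero] at h2
      show E s *ᵥ (Pi.single v 1 : V → ℝ) = E s *ᵥ (Pi.single u 1 : V → ℝ)
      rw [h2, hEu]
  refine ⟨hext_u, ?_, hsc⟩
  have hsupp_v : suppIdx E v = suppIdx E u := by
    ext r
    rw [mem_supp, mem_supp]
    rcases hsc r with h1 | h1
    · have h1' : E r *ᵥ (Pi.single v 1 : V → ℝ) = E r *ᵥ (Pi.single u 1 : V → ℝ) := h1
      rw [h1']
    · have h1' : E r *ᵥ (Pi.single v 1 : V → ℝ) = -(E r *ᵥ (Pi.single u 1 : V → ℝ)) := h1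
      rw [h1']
      simp [neg_eq_zero]
  have heccv : ecc X v = ε := by rw [← hdvv, hduv]
  rw [SpectrallyExtremal, dualDeg, hsupp_v, hcard, heccv]
  omega
end
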